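/- For every α in the probability simplex △^d, the rescaled Sinkhorn negentropy with cost C/ε converges as ε → +∞ to half the negative expected cost: lim_{ε→+∞} ε · Ω_{C/ε}(α) = −(1/2) Σ_{i,j=1}^d α_i α_j c_{ij}. -/

import Mathlib

open Finset Real Filter

noncomputable section

/-- The probability simplex in `ℝ^d`. -/
def simplexS (d : ℕ) : Set (Fin d → ℝ) := stdSimplex ℝ (Fin d)

/-- Transport plans between `α` and `β`: nonnegative matrices with prescribed marginals,
supported where `α i * β j > 0`. -/
def couplings {d : ℕ} (α β : Fin d → ℝ) : Set (Matrix (Fin d) (Fin d) ℝ) :=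
  {p | (∀ i j, 0 ≤ p i j) ∧ (∀ i, ∑ j, p i j = α i) ∧ (∀ j, ∑ i, p i j = β j) ∧
    ∀ i j, α i * β j = 0 → p i j = 0}

/-- The entropy-regularized transport cost of a plan `p` (with the convention `0 log 0 = 0`,
which holds automatically since `Real.log 0 = 0`). -/
def OTcost {d : ℕ} (C : Matrix (Fin d) (Fin d) ℝ) (ε : ℝ) (α β : Fin d → ℝ)
    (p : Matrix (Fin d) (Fin d) ℝ) : ℝ :=
  (∑ i, ∑ j, p i j * C i j) + ε * ∑ i, ∑ j, p i j * Real.log (p i j / (α i * β j))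

/-- Entropy-regularized optimal transport cost `OT_{C,ε}(α,β)`. -/
def OT {d : ℕ} (C : Matrix (Fin d) (Fin d) ℝ) (ε : ℝ) (α β : Fin d → ℝ) : ℝ :=
  sInf (OTcost C ε α β '' couplings α β)

/-- The Sinkhorn negentropy `Ω_C(α) = -(1/2) OT_{C,2}(α,α)`. -/
def Omega {d : ℕ} (C : Matrix (Fin d) (Fin d) ℝ) (α : Fin d → ℝ) : ℝ :=
  -(1 / 2) * OT C 2 α α

lemma sum2_congr {d : ℕ} {f g : Fin d → Fin d → ℝ} (h : ∀ i j, f i j = g i j) :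
    ∑ i, ∑ j, f i j = ∑ i, ∑ j, g i j :=
  Finset.sum_congr rfl fun i _ => Finset.sum_congr rfl fun j _ => h i j

lemma sum2_le {d : ℕ} {f g : Fin d → Fin d → ℝ} (h : ∀ i j, f i j ≤ g i j) :
    ∑ i, ∑ j, f i j ≤ ∑ i, ∑ j, g i j :=
  Finset.sum_le_sum fun i _ => Finset.sum_le_sum fun j _ => h i j

lemma sum2_add {d : ℕ} (f g : Fin d → Fin d → ℝ) :
    ∑ i, ∑ j, (f i j + g i j) = (∑ i, ∑ j, f i j) + ∑ i, ∑ j, g i j := by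
  simp [Finset.sum_add_distrib]

lemma sum2_sub {d : ℕ} (f g : Fin d → Fin d → ℝ) :
    ∑ i, ∑ j, (f i j - g i j) = (∑ i, ∑ j, f i j) - ∑ i, ∑ j, g i j := by
  simp [Finset.sum_sub_distrib]

lemma sum2_div {d : ℕ} (f : Fin d → Fin d → ℝ) (e : ℝ) :
    (∑ i, ∑ j, f i j) / e = ∑ i, ∑ j, f i j / e := by
  simp [Finset.sum_div]


lemma logDerivMono {x y : ℝ} (hy : 0 < y) (hx1 : x ≤ 1) (hyx : y ≤ x) :
    Real.log y + 1 - y ≤ Real.log x + 1 - x := by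
  have hx : 0 < x := lt_of_lt_of_le hy hyx
  have h1 : Real.log (y / x) ≤ y / x - 1 := Real.log_le_sub_one_of_pos (by positivity)
  rw [Real.log_div hy.ne' hx.ne'] at h1
  have h2 : y / x - 1 = (y - x) / x := by field_simp
  have h3 : (y - x) / x ≤ y - x := by
    rw [div_le_iff₀ hx]; nlinarith
  linarith

lemma hderiv_f : ∀ z : ℝ, 0 < z →
    HasDerivAt (fun t => t * Real.log t - t ^ 2 / 2) (Real.log z + 1 - z) z := by
  intro z hz
  have h1 := Real.hasDerivAt_mul_log hz.ne'
  have h2 : HasDerivAt (fun t : ℝ => t ^ 2 / 2) z z := by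
    have := (hasDerivAt_pow 2 z).div_const 2
    simpa using this
  exact h1.sub h2

lemma tangent_line {q x : ℝ} (hq : 0 < q) (hq1 : q ≤ 1) (hx : 0 < x) (hx1 : x ≤ 1) :
    q * Real.log q - q ^ 2 / 2 + (Real.log q + 1 - q) * (x - q) ≤ x * Real.log x - x ^ 2 / 2 := by
  set f : ℝ → ℝ := fun t => t * Real.log t - t ^ 2 / 2 with hf
  have hcont : ∀ a b : ℝ, 0 < a → ContinuousOn f (Set.Icc a b) := by
    intro a b ha
    exact fun z hz => ((hderiv_f z (lt_of_lt_of_le ha hz.1)).continuousAt).continuousWithinAt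
  rcases lt_trichotomy x q with h | h | h
  · obtain ⟨c, hc, hc'⟩ := exists_hasDerivAt_eq_slope f (fun t => Real.log t + 1 - t) h
      (hcont x q hx) (fun z hz => hderiv_f z (lt_trans hx hz.1))
    have hmono := logDerivMono (lt_trans hx hc.1) hq1 hc.2.le
    have hslope : f q - f x = (Real.log c + 1 - c) * (q - x) := by
      rw [hc', div_mul_cancel₀ _ (sub_ne_zero.mpr h.ne')]
    simp only [hf] at hslope
    nlinarith [mul_le_mul_of_nonneg_right hmono (by linarith : (0:ℝ) ≤ q - x)]
  · subst h; simp
  · obtain ⟨c, hc, hc'⟩ := exists_hasDerivAt_eq_slope f (fun t => Real.log t + 1 - t) h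
      (hcont q x hq) (fun z hz => hderiv_f z (lt_trans hq hz.1))
    have hmono := logDerivMono hq (le_trans hc.2.le hx1) hc.1.le
    have hslope : f x - f q = (Real.log c + 1 - c) * (x - q) := by
      rw [hc', div_mul_cancel₀ _ (sub_ne_zero.mpr h.ne')]
    simp only [hf] at hslope
    nlinarith [mul_le_mul_of_nonneg_right hmono (by linarith : (0:ℝ) ≤ x - q)]

lemma cell_ineq {q x : ℝ} (hq : 0 < q) (hq1 : q ≤ 1) (hx : 0 ≤ x) (hx1 : x ≤ 1) :
    (x - q) + (x - q) ^ 2 / 2 ≤ x * Real.log (x / q) := by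
  rcases eq_or_lt_of_le hx with h | h
  · rw [← h]; simp; nlinarith
  · rw [Real.log_div h.ne' hq.ne']
    have := tangent_line hq hq1 h hx1
    nlinarith [this]

lemma cell_main {c e p q : ℝ} (hp : 0 ≤ p) (hp1 : p ≤ 1) (hq : 0 ≤ q) (hq1 : q ≤ 1)
    (hzero : q = 0 → p = 0) :
    q * (c / e) - (c / e) ^ 2 / 4 + 2 * (p - q) ≤ p * (c / e) + 2 * (p * Real.log (p / q)) := by
  rcases eq_or_lt_of_le hq with h | h
  · have hp0 := hzero h.symm
    rw [← h, hp0]; simp; positivity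
  · have := cell_ineq h hq1 hp hp1
    nlinarith [sq_nonneg (p - q + (c / e) / 2), this]

theorem sinkhorn_negentropy_limit_kernel_norm (d : ℕ) (hd : 1 ≤ d)
    (C : Matrix (Fin d) (Fin d) ℝ) (hCsym : C.IsSymm) (hCdiag : ∀ i, C i i = 0)
    (α : Fin d → ℝ) (hα : α ∈ simplexS d) :
    Filter.Tendsto (fun ε : ℝ => ε * Omega (Matrix.of fun i j => C i j / ε) α)
      Filter.atTop (nhds (-(1 / 2) * ∑ i, ∑ j, α i * α j * C i j)) := by
  obtain ⟨hα0, hα1⟩ := hα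
  set S := ∑ i, ∑ j, α i * α j * C i j with hS
  set K := ∑ i, ∑ j, (C i j) ^ 2 with hK
  have hαle : ∀ i, α i ≤ 1 := by
    intro i
    calc α i ≤ ∑ j, α j := Finset.single_le_sum (fun j _ => hα0 j) (Finset.mem_univ i)
    _ = 1 := hα1
  have hrowQ : ∀ i, ∑ j, α i * α j = α i := fun i => by
    rw [← Finset.mul_sum, hα1, mul_one]
  set Q : Matrix (Fin d) (Fin d) ℝ := Matrix.of fun i j => α i * α j with hQ
  have hQmem : Q ∈ couplings α α := by
    refine ⟨fun i j => mul_nonneg (hα0 i) (hα0 j), hrowQ, fun j => ?_, fun i j h => h⟩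
    show ∑ i, α i * α j = α j
    rw [← Finset.sum_mul, hα1, one_mul]
  have hQ1 : ∑ i, ∑ j, α i * α j = 1 := by
    rw [Finset.sum_congr rfl fun i _ => hrowQ i, hα1]
  have main : ∀ ε : ℝ, 0 < ε →
      -(1 / 2) * S ≤ ε * Omega (Matrix.of fun i j => C i j / ε) α ∧
      ε * Omega (Matrix.of fun i j => C i j / ε) α ≤ -(1 / 2) * S + K / (8 * ε) := by
    intro ε hε
    set Cε : Matrix (Fin d) (Fin d) ℝ := Matrix.of fun i j => C i j / ε with hCε
    -- cost of the product coupling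
    have hQcost : OTcost Cε 2 α α Q = S / ε := by
      have hlog : ∑ i, ∑ j, Q i j * Real.log (Q i j / (α i * α j)) = 0 := by
        apply Finset.sum_eq_zero; intro i _
        apply Finset.sum_eq_zero; intro j _
        by_cases h : α i * α j = 0
        · simp [hQ, Matrix.of_apply, h]
        · simp [hQ, Matrix.of_apply, div_self h]
      simp only [OTcost, hlog, mul_zero, add_zero]
      rw [hS, sum2_div]
      exact sum2_congr fun i j => by simp [hQ, hCε]; ring
    -- lower bound for all couplings
    have key : ∀ p ∈ couplings α α, S / ε - K / (4 * ε ^ 2) ≤ OTcost Cε 2 α α p := by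
      rintro p ⟨hp0, hrow, hcol, hsupp⟩
      have hP1 : ∑ i, ∑ j, p i j = 1 := by
        rw [Finset.sum_congr rfl fun i _ => hrow i, hα1]
      have hcell : ∀ i j,
          (α i * α j) * (C i j / ε) - (C i j / ε) ^ 2 / 4 + 2 * (p i j - α i * α j) ≤
          p i j * (C i j / ε) + 2 * (p i j * Real.log (p i j / (α i * α j))) := by
        intro i j
        refine cell_main (hp0 i j) ?_ (mul_nonneg (hα0 i) (hα0 j)) ?_ (hsupp i j)
        · calc p i j ≤ ∑ j', p i j' :=
            Finset.single_le_sum (fun j' _ => hp0 i j') (Finset.mem_univ j)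
          _ = α i := hrow i
          _ ≤ 1 := hαle i
        · exact mul_le_one₀ (hαle i) (hα0 j) (hαle j)
      have hsum := sum2_le hcell
      have t1 : ∑ i, ∑ j, (α i * α j) * (C i j / ε) = S / ε := by
        rw [hS, sum2_div]; exact sum2_congr fun i j => by ring
      have t2 : ∑ i, ∑ j, (C i j / ε) ^ 2 / 4 = K / (4 * ε ^ 2) := by
        rw [hK, sum2_div]
        refine sum2_congr fun i j => ?_
        rw [div_pow]
        ring
      have t3 : ∑ i, ∑ j, (2 * (p i j - α i * α j)) = 0 := by
        have h2 : ∑ i, ∑ j, (2 * (p i j - α i * α j))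
            = 2 * ∑ i, ∑ j, (p i j - α i * α j) := by
          rw [Finset.mul_sum]
          exact Finset.sum_congr rfl fun i _ => by rw [Finset.mul_sum]
        rw [h2, sum2_sub (fun i j => p i j) (fun i j => α i * α j), hP1, hQ1]; ring
      have hLHS : ∑ i, ∑ j,
          ((α i * α j) * (C i j / ε) - (C i j / ε) ^ 2 / 4 + 2 * (p i j - α i * α j))
          = S / ε - K / (4 * ε ^ 2) := by
        rw [sum2_add, sum2_sub, t1, t2, t3, add_zero]
      have hRHS : ∑ i, ∑ j,
          (p i j * (C i j / ε) + 2 * (p i j * Real.log (p i j / (α i * α j))))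
          = OTcost Cε 2 α α p := by
        rw [sum2_add]
        simp only [OTcost, hCε, Matrix.of_apply, Finset.mul_sum]
      rw [hLHS, hRHS] at hsum
      exact hsum
    have hne : (OTcost Cε 2 α α '' couplings α α).Nonempty :=
      ⟨_, Set.mem_image_of_mem _ hQmem⟩
    have hbdd : BddBelow (OTcost Cε 2 α α '' couplings α α) := by
      refine ⟨S / ε - K / (4 * ε ^ 2), ?_⟩
      rintro y ⟨p, hp, rfl⟩; exact key p hp
    have h1 : OT Cε 2 α α ≤ S / ε := csInf_le hbdd ⟨Q, hQmem, hQcost⟩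
    have h2 : S / ε - K / (4 * ε ^ 2) ≤ OT Cε 2 α α := by
      refine le_csInf hne ?_
      rintro y ⟨p, hp, rfl⟩; exact key p hp
    have hne' : ε ≠ 0 := hε.ne'
    have e1 : ε * (S / ε - K / (4 * ε ^ 2)) = S - K / (4 * ε) := by
      field_simp
    have e2 : ε * (S / ε) = S := by field_simp
    have hεle : ε * OT Cε 2 α α ≤ S := by
      have := mul_le_mul_of_nonneg_left h1 hε.le; rwa [e2] at this
    have hεge : S - K / (4 * ε) ≤ ε * OT Cε 2 α α := by
      have := mul_le_mul_of_nonneg_left h2 hε.le; rwa [e1] at this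
    constructor
    · simp only [Omega]; nlinarith [hεle]
    · simp only [Omega]
      have : K / (8 * ε) = (1 / 2) * (K / (4 * ε)) := by ring
      rw [this]; nlinarith [hεge]
  -- squeeze
  have hK0 : Tendsto (fun ε : ℝ => K / (8 * ε)) atTop (nhds 0) := by
    apply Tendsto.div_atTop (tendsto_const_nhds (x := K))
    exact Tendsto.const_mul_atTop (by norm_num) tendsto_id
  have hh : Tendsto (fun ε : ℝ => -(1 / 2) * S + K / (8 * ε)) atTop (nhds (-(1 / 2) * S)) := by
    have := (tendsto_const_nhds (x := -(1 / 2) * S)).add hK0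
    rwa [add_zero] at this
  refine tendsto_of_tendsto_of_tendsto_of_le_of_le'
    (tendsto_const_nhds (x := -(1 / 2) * S)) hh ?_ ?_
  · filter_upwards [eventually_gt_atTop 0] with ε hε using (main ε hε).1
  · filter_upwards [eventually_gt_atTop 0] with ε hε using (main ε hε).2
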